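/- arXiv:2212.12984 — 3 statements merged into one kernel-verified Lean document; each statement's English description precedes it below -/
import Mathlib

section
/- Let u be twice continuously differentiable on [a,b] and s ∈ (a,b). Then the Hadamard finite-part integral ⨍ₐᵇ u(x)/(x-s)² dx, defined as F.P. lim_{ε→0⁺} [∫ₐ^{s-ε} u(x)/(x-s)² dx + ∫_{s+ε}^b u(x)/(x-s)² dx], equals ∫ₐᵇ ∫₀¹ (1-t) u''((1-t)s + tx) dt dx − u(s)(1/(b-s) + 1/(s-a)) + u'(s)·ln((b-s)/(s-a)). -/
open MeasureTheory intervalIntegral Filter Topology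

/-- Hadamard finite-part representation of the hypersingular integral
`⨍ₐᵇ u(x)/(x-s)² dx` for `u ∈ C²([a,b])` and `s ∈ (a,b)`. -/
theorem hypersingular_finite_part (a b s : ℝ) (has : a < s) (hsb : s < b)
    (u u' u'' : ℝ → ℝ)
    (hu' : ∀ y ∈ Set.Icc a b, HasDerivAt u (u' y) y)
    (hu'' : ∀ y ∈ Set.Icc a b, HasDerivAt u' (u'' y) y)
    (hcont : ContinuousOn u'' (Set.Icc a b)) :
    Tendsto (fun ε : ℝ =>
        (∫ x in a..(s - ε), u x / (x - s) ^ 2)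
        + (∫ x in (s + ε)..b, u x / (x - s) ^ 2) - 2 * u s / ε)
      (𝓝[>] 0)
      (𝓝 ((∫ x in a..b, ∫ t in (0:ℝ)..1, (1 - t) * u'' ((1 - t) * s + t * x))
        - u s * (1 / (b - s) + 1 / (s - a))
        + u' s * Real.log ((b - s) / (s - a)))) := by
  have hab : a ≤ b := (has.trans hsb).le
  have hsa : 0 < s - a := sub_pos.mpr has
  have hbs : 0 < b - s := sub_pos.mpr hsb
  have hsmem : s ∈ Set.Icc a b := ⟨has.le, hsb.le⟩
  -- continuous extension of u'' to all of ℝ via clamping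
  set U : ℝ → ℝ := fun x => u'' (max a (min x b)) with hUdef
  have hclamp : ∀ x : ℝ, max a (min x b) ∈ Set.Icc a b := fun x =>
    ⟨le_max_left _ _, max_le hab (min_le_right x b)⟩
  have hUeq : ∀ x ∈ Set.Icc a b, U x = u'' x := by
    intro x hx
    simp only [hUdef, min_eq_left hx.2, max_eq_right hx.1]
  have hUc : Continuous U :=
    hcont.comp_continuous (by fun_prop) hclamp
  -- the remainder function G
  set G : ℝ → ℝ := fun x => ∫ t in (0:ℝ)..1, (1 - t) * U ((1 - t) * s + t * x) with hGdef
  have hGc : Continuous G := by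
    apply intervalIntegral.continuous_parametric_intervalIntegral_of_continuous' (μ := volume)
    have : Continuous fun p : ℝ × ℝ => (1 - p.2) * U ((1 - p.2) * s + p.2 * p.1) := by fun_prop
    exact this
  have hmemIcc : ∀ x ∈ Set.Icc a b, ∀ t ∈ Set.Icc (0:ℝ) 1,
      (1 - t) * s + t * x ∈ Set.Icc a b := by
    intro x hx t ht
    have := (convex_Icc a b) hsmem hx (by linarith [ht.2] : (0:ℝ) ≤ 1 - t) ht.1 (by ring)
    simpa [smul_eq_mul] using this
  have hgG : ∀ x ∈ Set.Icc a b,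
      (∫ t in (0:ℝ)..1, (1 - t) * u'' ((1 - t) * s + t * x)) = G x := by
    intro x hx
    apply intervalIntegral.integral_congr
    intro t ht
    rw [Set.uIcc_of_le (by norm_num : (0:ℝ) ≤ 1)] at ht
    simp only
    rw [hUeq _ (hmemIcc x hx t ht)]
  -- Taylor expansion with integral remainder
  have hTay : ∀ x ∈ Set.Icc a b, u x = u s + u' s * (x - s) + (x - s) ^ 2 * G x := by
    intro x hx
    have hsub : Set.uIcc s x ⊆ Set.Icc a b := Set.uIcc_subset_Icc hsmem hx
    have hφ : ∀ t ∈ Set.uIcc s x,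
        HasDerivAt (fun t => u t + u' t * (x - t)) (u'' t * (x - t)) t := by
      intro t ht
      have h1 := hu' t (hsub ht)
      have h2 := hu'' t (hsub ht)
      have h3 : HasDerivAt (fun t : ℝ => x - t) (-1) t := by
        simpa using (hasDerivAt_id t).const_sub x
      have := h1.add (h2.mul h3)
      refine this.congr_deriv ?_
      ring
    have hInt : IntervalIntegrable (fun t => u'' t * (x - t)) volume s x := by
      apply ContinuousOn.intervalIntegrable
      exact (hcont.mono hsub).mul ((continuous_const.sub continuous_id).continuousOn)
    have hFTC := intervalIntegral.integral_eq_sub_of_hasDerivAt hφ hInt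
    -- substitution t = (1-τ)s + τx
    have hderiv : ∀ τ ∈ Set.uIcc (0:ℝ) 1,
        HasDerivAt (fun τ : ℝ => (1 - τ) * s + τ * x) (x - s) τ := by
      intro τ _
      have hfun : (fun τ : ℝ => (1 - τ) * s + τ * x) = fun τ => s + (x - s) * τ := by
        funext τ; ring
      rw [hfun]
      simpa using ((hasDerivAt_id τ).const_mul (x - s)).const_add s
    have hsubst := intervalIntegral.integral_comp_smul_deriv
      (f := fun τ => (1 - τ) * s + τ * x) (f' := fun _ => x - s)
      (g := fun t => U t * (x - t)) hderiv
      (continuousOn_const) (hUc.mul (continuous_const.sub continuous_id))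
    have h01 : ((1:ℝ) - 0) * s + 0 * x = s := by ring
    have h11 : ((1:ℝ) - 1) * s + 1 * x = x := by ring
    simp only [Function.comp, smul_eq_mul] at hsubst
    rw [h01, h11] at hsubst
    have hUu : (∫ t in s..x, U t * (x - t)) = ∫ t in s..x, u'' t * (x - t) := by
      apply intervalIntegral.integral_congr
      intro t ht
      simp only
      rw [hUeq _ (hsub ht)]
    have hlhs : (∫ τ in (0:ℝ)..1,
        (x - s) * (U ((1 - τ) * s + τ * x) * (x - ((1 - τ) * s + τ * x))))
        = (x - s) ^ 2 * G x := by
      rw [hGdef]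
      rw [← intervalIntegral.integral_const_mul]
      apply intervalIntegral.integral_congr
      intro τ _
      simp only
      ring
    rw [hlhs, hUu] at hsubst
    rw [← hsubst] at hFTC
    have : u x + u' x * (x - x) - (u s + u' s * (x - s)) = (x - s) ^ 2 * G x := by
      rw [← hFTC]
    nlinarith [this]
  -- explicit computation for fixed ε
  set δ := min (s - a) (b - s) with hδdef
  have hδpos : 0 < δ := lt_min hsa hbs
  set C : ℝ := -(u s * (1 / (b - s) + 1 / (s - a))) + u' s * Real.log ((b - s) / (s - a)) with hCdef
  set F : ℝ → ℝ := fun y => ∫ x in a..y, G x with hFdef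
  have hFc : Continuous F :=
    intervalIntegral.continuous_primitive (fun c d => hGc.intervalIntegrable c d) a
  have hmain : ∀ ε ∈ Set.Ioo (0:ℝ) δ,
      (∫ x in a..(s - ε), u x / (x - s) ^ 2)
        + (∫ x in (s + ε)..b, u x / (x - s) ^ 2) - 2 * u s / ε
      = F (s - ε) + (F b - F (s + ε)) + C := by
    intro ε hε
    obtain ⟨hε0, hεδ⟩ := hε
    have hεsa : ε < s - a := lt_of_lt_of_le hεδ (min_le_left _ _)
    have hεbs : ε < b - s := lt_of_lt_of_le hεδ (min_le_right _ _)
    have hals : a ≤ s - ε := by linarith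
    have hsεb : s + ε ≤ b := by linarith
    -- left interval facts
    have hLmem : Set.uIcc a (s - ε) ⊆ Set.Icc a b := by
      rw [Set.uIcc_of_le hals]
      exact Set.Icc_subset_Icc le_rfl (by linarith)
    have hLne : ∀ x ∈ Set.uIcc a (s - ε), x - s ≠ 0 := by
      intro x hx
      rw [Set.uIcc_of_le hals] at hx
      have : x ≤ s - ε := hx.2
      intro h; rw [sub_eq_zero] at h; linarith
    have hRmem : Set.uIcc (s + ε) b ⊆ Set.Icc a b := by
      rw [Set.uIcc_of_le hsεb]
      exact Set.Icc_subset_Icc (by linarith) le_rfl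
    have hRne : ∀ x ∈ Set.uIcc (s + ε) b, x - s ≠ 0 := by
      intro x hx
      rw [Set.uIcc_of_le hsεb] at hx
      have : s + ε ≤ x := hx.1
      intro h; rw [sub_eq_zero] at h; linarith
    -- integrable pieces
    have int1L : IntervalIntegrable (fun x => u s / (x - s) ^ 2) volume a (s - ε) := by
      apply ContinuousOn.intervalIntegrable
      exact continuousOn_const.div (by fun_prop)
        (fun x hx => pow_ne_zero 2 (hLne x hx))
    have int2L : IntervalIntegrable (fun x => u' s / (x - s)) volume a (s - ε) := by
      apply ContinuousOn.intervalIntegrable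
      exact continuousOn_const.div (by fun_prop) (fun x hx => hLne x hx)
    have int3L : IntervalIntegrable G volume a (s - ε) := hGc.intervalIntegrable _ _
    have int1R : IntervalIntegrable (fun x => u s / (x - s) ^ 2) volume (s + ε) b := by
      apply ContinuousOn.intervalIntegrable
      exact continuousOn_const.div (by fun_prop)
        (fun x hx => pow_ne_zero 2 (hRne x hx))
    have int2R : IntervalIntegrable (fun x => u' s / (x - s)) volume (s + ε) b := by
      apply ContinuousOn.intervalIntegrable
      exact continuousOn_const.div (by fun_prop) (fun x hx => hRne x hx)
    have int3R : IntervalIntegrable G volume (s + ε) b := hGc.intervalIntegrable _ _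
    -- decompose integrands
    have hdecL : (∫ x in a..(s - ε), u x / (x - s) ^ 2)
        = (∫ x in a..(s - ε), u s / (x - s) ^ 2) + (∫ x in a..(s - ε), u' s / (x - s))
          + ∫ x in a..(s - ε), G x := by
      rw [← intervalIntegral.integral_add int1L int2L,
        ← intervalIntegral.integral_add (int1L.add int2L) int3L]
      apply intervalIntegral.integral_congr
      intro x hx
      have hne := hLne x hx
      have hx2 : (x - s) ^ 2 ≠ 0 := pow_ne_zero 2 hne
      simp only
      rw [hTay x (hLmem hx)]
      field_simp
    have hdecR : (∫ x in (s + ε)..b, u x / (x - s) ^ 2)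
        = (∫ x in (s + ε)..b, u s / (x - s) ^ 2) + (∫ x in (s + ε)..b, u' s / (x - s))
          + ∫ x in (s + ε)..b, G x := by
      rw [← intervalIntegral.integral_add int1R int2R,
        ← intervalIntegral.integral_add (int1R.add int2R) int3R]
      apply intervalIntegral.integral_congr
      intro x hx
      have hne := hRne x hx
      have hx2 : (x - s) ^ 2 ≠ 0 := pow_ne_zero 2 hne
      simp only
      rw [hTay x (hRmem hx)]
      field_simp
    -- evaluate the four singular integrals
    have e1L : (∫ x in a..(s - ε), u s / (x - s) ^ 2) = u s * (1 / ε - 1 / (s - a)) := by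
      have hd : ∀ x ∈ Set.uIcc a (s - ε),
          HasDerivAt (fun x => -(x - s)⁻¹) (1 / (x - s) ^ 2) x := by
        intro x hx
        have hne := hLne x hx
        have := (((hasDerivAt_id x).sub_const s).inv hne).neg
        refine this.congr_deriv ?_
        simp only [id]
        ring
      have hint : IntervalIntegrable (fun x => 1 / (x - s) ^ 2) volume a (s - ε) := by
        apply ContinuousOn.intervalIntegrable
        exact continuousOn_const.div (by fun_prop)
          (fun x hx => pow_ne_zero 2 (hLne x hx))
      have := intervalIntegral.integral_eq_sub_of_hasDerivAt hd hint
      have hconst : (∫ x in a..(s - ε), u s / (x - s) ^ 2)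
          = u s * ∫ x in a..(s - ε), 1 / (x - s) ^ 2 := by
        rw [← intervalIntegral.integral_const_mul]
        apply intervalIntegral.integral_congr
        intro x _; simp only; ring
      rw [hconst, this]
      have h1 : s - ε - s = -ε := by ring
      rw [h1]
      have hne1 : a - s ≠ 0 := by intro h; rw [sub_eq_zero] at h; linarith
      field_simp
      ring
    have e1R : (∫ x in (s + ε)..b, u s / (x - s) ^ 2) = u s * (1 / ε - 1 / (b - s)) := by
      have hd : ∀ x ∈ Set.uIcc (s + ε) b,
          HasDerivAt (fun x => -(x - s)⁻¹) (1 / (x - s) ^ 2) x := by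
        intro x hx
        have hne := hRne x hx
        have := (((hasDerivAt_id x).sub_const s).inv hne).neg
        refine this.congr_deriv ?_
        simp only [id]
        ring
      have hint : IntervalIntegrable (fun x => 1 / (x - s) ^ 2) volume (s + ε) b := by
        apply ContinuousOn.intervalIntegrable
        exact continuousOn_const.div (by fun_prop)
          (fun x hx => pow_ne_zero 2 (hRne x hx))
      have := intervalIntegral.integral_eq_sub_of_hasDerivAt hd hint
      have hconst : (∫ x in (s + ε)..b, u s / (x - s) ^ 2)
          = u s * ∫ x in (s + ε)..b, 1 / (x - s) ^ 2 := by
        rw [← intervalIntegral.integral_const_mul]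
        apply intervalIntegral.integral_congr
        intro x _; simp only; ring
      rw [hconst, this]
      have h1 : s + ε - s = ε := by ring
      rw [h1]
      field_simp
      ring
    have e2L : (∫ x in a..(s - ε), u' s / (x - s))
        = u' s * (Real.log ε - Real.log (s - a)) := by
      have hd : ∀ x ∈ Set.uIcc a (s - ε),
          HasDerivAt (fun x => Real.log (s - x)) (1 / (x - s)) x := by
        intro x hx
        have hne := hLne x hx
        have hne' : s - x ≠ 0 := by
          intro h; apply hne; rw [sub_eq_zero] at h ⊢; exact h.symm
        have h0 : HasDerivAt (fun x : ℝ => s - x) (0 - 1) x :=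
          (hasDerivAt_const x s).sub (hasDerivAt_id x)
        have := h0.log hne'
        convert this using 1
        rw [div_eq_div_iff hne hne']
        ring
      have hint : IntervalIntegrable (fun x => 1 / (x - s)) volume a (s - ε) := by
        apply ContinuousOn.intervalIntegrable
        exact continuousOn_const.div (by fun_prop) (fun x hx => hLne x hx)
      have := intervalIntegral.integral_eq_sub_of_hasDerivAt hd hint
      have hconst : (∫ x in a..(s - ε), u' s / (x - s))
          = u' s * ∫ x in a..(s - ε), 1 / (x - s) := by
        rw [← intervalIntegral.integral_const_mul]
        apply intervalIntegral.integral_congr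
        intro x _; simp only; ring
      rw [hconst, this]
      have h1 : s - (s - ε) = ε := by ring
      rw [h1]
    have e2R : (∫ x in (s + ε)..b, u' s / (x - s))
        = u' s * (Real.log (b - s) - Real.log ε) := by
      have hd : ∀ x ∈ Set.uIcc (s + ε) b,
          HasDerivAt (fun x => Real.log (x - s)) (1 / (x - s)) x := by
        intro x hx
        have hne := hRne x hx
        have h0 : HasDerivAt (fun x : ℝ => x - s) 1 x := (hasDerivAt_id x).sub_const s
        have := h0.log hne
        convert this using 1
      have hint : IntervalIntegrable (fun x => 1 / (x - s)) volume (s + ε) b := by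
        apply ContinuousOn.intervalIntegrable
        exact continuousOn_const.div (by fun_prop) (fun x hx => hRne x hx)
      have := intervalIntegral.integral_eq_sub_of_hasDerivAt hd hint
      have hconst : (∫ x in (s + ε)..b, u' s / (x - s))
          = u' s * ∫ x in (s + ε)..b, 1 / (x - s) := by
        rw [← intervalIntegral.integral_const_mul]
        apply intervalIntegral.integral_congr
        intro x _; simp only; ring
      rw [hconst, this]
      have h1 : s + ε - s = ε := by ring
      rw [h1]
    -- assemble
    have hFsplit : F b - F (s + ε) = ∫ x in (s + ε)..b, G x := by
      rw [hFdef]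
      exact intervalIntegral.integral_interval_sub_left
        (hGc.intervalIntegrable a b) (hGc.intervalIntegrable a (s + ε))
    have hlog : Real.log ((b - s) / (s - a)) = Real.log (b - s) - Real.log (s - a) :=
      Real.log_div hbs.ne' hsa.ne'
    rw [hdecL, hdecR, e1L, e1R, e2L, e2R, hFsplit, hCdef, hlog]
    have hFl : F (s - ε) = ∫ x in a..(s - ε), G x := rfl
    rw [hFl]
    field_simp
    ring
  -- take the limit
  have hEv : (fun ε : ℝ => F (s - ε) + (F b - F (s + ε)) + C)
      =ᶠ[𝓝[>] (0:ℝ)] fun ε =>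
      (∫ x in a..(s - ε), u x / (x - s) ^ 2)
        + (∫ x in (s + ε)..b, u x / (x - s) ^ 2) - 2 * u s / ε := by
    filter_upwards [Ioo_mem_nhdsGT_of_mem (Set.mem_Ico.mpr ⟨le_rfl, hδpos⟩)] with ε hε
    exact (hmain ε hε).symm
  have t1 : Tendsto (fun ε : ℝ => s - ε) (𝓝[>] 0) (𝓝 s) := by
    have : Tendsto (fun ε : ℝ => s - ε) (𝓝 0) (𝓝 (s - 0)) :=
      tendsto_const_nhds.sub tendsto_id
    simpa using this.mono_left nhdsWithin_le_nhds
  have t2 : Tendsto (fun ε : ℝ => s + ε) (𝓝[>] 0) (𝓝 s) := by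
    have : Tendsto (fun ε : ℝ => s + ε) (𝓝 0) (𝓝 (s + 0)) :=
      tendsto_const_nhds.add tendsto_id
    simpa using this.mono_left nhdsWithin_le_nhds
  have hF1 : Tendsto (fun ε : ℝ => F (s - ε)) (𝓝[>] 0) (𝓝 (F s)) :=
    (hFc.tendsto s).comp t1
  have hF2 : Tendsto (fun ε : ℝ => F (s + ε)) (𝓝[>] 0) (𝓝 (F s)) :=
    (hFc.tendsto s).comp t2
  have hlim : Tendsto (fun ε : ℝ => F (s - ε) + (F b - F (s + ε)) + C) (𝓝[>] 0)
      (𝓝 (F s + (F b - F s) + C)) :=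
    (hF1.add (tendsto_const_nhds.sub hF2)).add tendsto_const_nhds
  have hFb : F b = ∫ x in a..b, ∫ t in (0:ℝ)..1, (1 - t) * u'' ((1 - t) * s + t * x) := by
    rw [hFdef]
    refine (intervalIntegral.integral_congr fun x hx => ?_).symm
    exact hgG x (by rwa [Set.uIcc_of_le hab] at hx)
  have hval : (∫ x in a..b, ∫ t in (0:ℝ)..1, (1 - t) * u'' ((1 - t) * s + t * x))
      - u s * (1 / (b - s) + 1 / (s - a)) + u' s * Real.log ((b - s) / (s - a))
      = F s + (F b - F s) + C := by
    rw [← hFb, hCdef]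
    ring
  rw [hval]
  exact hlim.congr' hEv
end

section
/- Let u : ℝᵈ → ℝ be bounded with ∫_{‖y−x‖ ≥ r₀} |u(x)−u(y)|/‖x−y‖^{d+α} dy < ∞ for some r₀ > 0, 0 < α < 2. Then ∫_{‖y−x‖ ≥ r₀} (u(x)−u(y))/‖x−y‖^{d+α} dy = (|S^{d−1}| r₀^{−α})/(2α) · E_{ξ,η∼Beta(α,1)}[2u(x) − u(x − (r₀/η)ξ) − u(x + (r₀/η)ξ)], where ξ is uniform on S^{d−1}. -/
open MeasureTheory


section Aux

open Set Metric

lemma my_integral_volumeIoiPow (n : ℕ) (φ : ℝ → ℝ) :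
    (∫ r : Ioi (0:ℝ), φ r ∂(Measure.volumeIoiPow n)) = ∫ r in Ioi (0:ℝ), r ^ n * φ r := by
  simp only [Measure.volumeIoiPow, ENNReal.ofReal]
  rw [integral_withDensity_eq_integral_smul
      ((measurable_subtype_coe.pow_const _).real_toNNReal),
    integral_subtype_comap measurableSet_Ioi fun a : ℝ ↦ Real.toNNReal (a ^ n) • φ a,
    setIntegral_congr_fun measurableSet_Ioi fun x hx ↦ ?_]
  rw [NNReal.smul_def, Real.coe_toNNReal _ (pow_nonneg hx.out.le _), smul_eq_mul]

variable {X : Type*} [NormedAddCommGroup X] [NormedSpace ℝ X] [Nontrivial X]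
  [MeasurableSpace X] [FiniteDimensional ℝ X] [BorelSpace X]
  (μ : Measure X) [μ.IsAddHaarMeasure]

lemma my_polar (H : X → ℝ) (hH : Integrable H μ) :
    ∫ z, H z ∂μ = ∫ ξ : sphere (0:X) 1, (∫ r in Ioi (0:ℝ),
        r ^ (Module.finrank ℝ X - 1) * H (r • (ξ:X))) ∂μ.toSphere := by
  have hemb := (MeasurableEmbedding.subtype_coe
    (measurableSet_singleton (0:X)).compl)
  have hcomap : Integrable (fun z : ({0}ᶜ : Set X) => H z) (μ.comap (↑)) := by
    have := hemb.integrableOn_iff_comap (f := H) (μ := μ)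
      (s := ({0}ᶜ : Set X)) (by rw [Subtype.range_coe])
    rw [IntegrableOn, restrict_compl_singleton] at this
    have h2 := this.mp hH
    simpa [IntegrableOn, Set.preimage, Measure.restrict_univ, Function.comp_def] using h2
  set g : sphere (0:X) 1 × Ioi (0:ℝ) → ℝ := fun p => H (p.2.1 • p.1.1) with hg
  have hmp := μ.measurePreserving_homeomorphUnitSphereProd
  have hcomp : (fun z : ({0}ᶜ : Set X) => H z) = g ∘ (homeomorphUnitSphereProd X) := by
    funext z
    simp only [Function.comp, hg, homeomorphUnitSphereProd_apply_fst_coe,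
      homeomorphUnitSphereProd_apply_snd_coe]
    rw [smul_inv_smul₀ (norm_ne_zero_iff.2 z.2)]
  have hgint : Integrable g (μ.toSphere.prod (Measure.volumeIoiPow (Module.finrank ℝ X - 1))) := by
    rw [← hmp.integrable_comp_emb (Homeomorph.measurableEmbedding _), ← hcomp]
    exact hcomap
  calc ∫ z, H z ∂μ = ∫ z : ({0}ᶜ : Set X), H z ∂(μ.comap (↑)) := by
        rw [integral_subtype_comap (measurableSet_singleton _).compl, restrict_compl_singleton]
    _ = ∫ p : sphere (0:X) 1 × Ioi (0:ℝ), g p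
          ∂(μ.toSphere.prod (Measure.volumeIoiPow (Module.finrank ℝ X - 1))) := by
        rw [← hmp.integral_comp (Homeomorph.measurableEmbedding _) g]
        exact integral_congr_ae (Filter.Eventually.of_forall fun z => congrFun hcomp z)
    _ = ∫ ξ : sphere (0:X) 1, (∫ r : Ioi (0:ℝ), g (ξ, r)
          ∂(Measure.volumeIoiPow (Module.finrank ℝ X - 1))) ∂μ.toSphere :=
        integral_prod g hgint
    _ = _ := by
        refine integral_congr_ae (Filter.Eventually.of_forall fun ξ => ?_)
        exact my_integral_volumeIoiPow _ (fun r => H (r • (ξ:X)))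

end Aux

abbrev EE (d : ℕ) := EuclideanSpace ℝ (Fin d)

/-- Monte Carlo representation of the outer part of the fractional Laplacian:
`∫_{‖y−x‖ ≥ r₀} (u(x)−u(y))/‖x−y‖^{d+α} dy
  = (|S^{d−1}| r₀^{−α})/(2α) · E_{ξ,η∼Beta(α,1)}[2u(x) − u(x−(r₀/η)ξ) − u(x+(r₀/η)ξ)]`,
where `ξ` is uniform on the unit sphere and `Beta(α,1)` has density `α t^{α−1}`
on `(0,1)`. -/
theorem fractional_outer_expectation (d : ℕ) (hd : 0 < d)
    (u : EuclideanSpace ℝ (Fin d) → ℝ) (hu : Continuous u)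
    (C : ℝ) (hub : ∀ y, |u y| ≤ C)
    (x : EuclideanSpace ℝ (Fin d)) (r₀ α : ℝ) (hr₀ : 0 < r₀)
    (hα0 : 0 < α) (hα2 : α < 2)
    (hint : IntegrableOn (fun y => |u x - u y| / ‖x - y‖ ^ ((d:ℝ) + α))
      (Metric.ball x r₀)ᶜ)
    (S : ℝ)
    (hS : S = (((volume : Measure (EuclideanSpace ℝ (Fin d))).toSphere) Set.univ).toReal) :
    ∫ y in (Metric.ball x r₀)ᶜ, (u x - u y) / ‖x - y‖ ^ ((d:ℝ) + α)
      = (S * r₀ ^ (-α) / (2 * α)) *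
        ((1 / S) * ∫ ξ : Metric.sphere (0 : EuclideanSpace ℝ (Fin d)) 1,
          (∫ η in (0:ℝ)..1,
            (2 * u x - u (x - (r₀ / η) • (ξ : EuclideanSpace ℝ (Fin d)))
              - u (x + (r₀ / η) • (ξ : EuclideanSpace ℝ (Fin d)))) *
            (α * η ^ (α - 1)))
          ∂((volume : Measure (EuclideanSpace ℝ (Fin d))).toSphere)) := by
  classical
  haveI : Nonempty (Fin d) := Fin.pos_iff_nonempty.mp hd
  haveI : Nontrivial (EE d) := inferInstance
  have hfr : Module.finrank ℝ (EE d) = d := finrank_euclideanSpace_fin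
  set ν := (volume : Measure (EE d)).toSphere with hν
  set f₀ : EE d → ℝ := fun y => (u x - u y) / ‖x - y‖ ^ ((d:ℝ) + α) with hf₀def
  have hexp : (0:ℝ) ≤ (d:ℝ) + α := by positivity
  have hmeas : Measurable f₀ := by
    apply Measurable.div
    · exact measurable_const.sub hu.measurable
    · exact ((continuous_const.sub continuous_id).norm.rpow_const
        (fun y => Or.inr hexp)).measurable
  have hf₀ : IntegrableOn f₀ (Metric.ball x r₀)ᶜ := by
    refine hint.mono' hmeas.aestronglyMeasurable.restrict ?_
    filter_upwards with y
    rw [hf₀def]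
    simp only [Real.norm_eq_abs]
    rw [abs_div, abs_of_nonneg (Real.rpow_nonneg (norm_nonneg _) _)]
  set g1 : EE d → ℝ := fun z => (u x - u (x + z)) / ‖z‖ ^ ((d:ℝ) + α) with hg1
  set G : EE d → ℝ := ((Metric.ball (0:EE d) r₀)ᶜ).indicator g1 with hGdef
  have hGeq : ∀ z, G z = (((Metric.ball x r₀)ᶜ).indicator f₀) (x + z) := by
    intro z
    have h1 : x + z ∈ (Metric.ball x r₀)ᶜ ↔ z ∈ (Metric.ball (0:EE d) r₀)ᶜ := by
      simp [Metric.mem_ball, dist_eq_norm, add_sub_cancel_left]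
    have h2 : f₀ (x + z) = g1 z := by
      rw [hf₀def, hg1]
      simp only []
      rw [show x - (x + z) = -z by abel, norm_neg]
    by_cases hz : z ∈ (Metric.ball (0:EE d) r₀)ᶜ
    · rw [hGdef, Set.indicator_of_mem hz, Set.indicator_of_mem (h1.2 hz), h2]
    · rw [hGdef, Set.indicator_of_notMem hz,
        Set.indicator_of_notMem (fun h => hz (h1.1 h))]
  have hGind : Integrable (((Metric.ball x r₀)ᶜ).indicator f₀) volume :=
    (integrable_indicator_iff Metric.isOpen_ball.measurableSet.compl).2 hf₀
  have hG : Integrable G volume :=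
    (hGind.comp_add_left x).congr (Filter.Eventually.of_forall fun z => (hGeq z).symm)
  have hLHS1 : (∫ y in (Metric.ball x r₀)ᶜ, f₀ y) = ∫ z, G z := by
    rw [← integral_indicator Metric.isOpen_ball.measurableSet.compl,
      ← integral_add_left_eq_self (((Metric.ball x r₀)ᶜ).indicator f₀) x]
    exact integral_congr_ae (Filter.Eventually.of_forall fun z => (hGeq z).symm)
  set H : EE d → ℝ := fun z => G z + G (-z) with hHdef
  have hGneg : Integrable (fun z => G (-z)) volume := hG.comp_neg
  have hH : Integrable H volume := hG.add hGneg
  have hG2 : (∫ z, G z) = (1/2) * ∫ z, H z := by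
    rw [hHdef]
    simp only []
    rw [integral_add hG hGneg, integral_neg_eq_self]
    ring
  have hpolar := my_polar (volume : Measure (EE d)) H hH
  rw [hfr] at hpolar
  -- inner radial integral, per direction
  have key : ∀ ξ : Metric.sphere (0:EE d) 1,
      (∫ r in Set.Ioi (0:ℝ), r ^ (d - 1) * H (r • (ξ:EE d)))
        = ∫ r in Set.Ioi r₀,
            (2 * u x - u (x - r • (ξ:EE d)) - u (x + r • (ξ:EE d))) * r ^ (-1 - α) := by
    intro ξ
    have hξ : ‖(ξ:EE d)‖ = 1 := by
      have h := ξ.2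
      rwa [mem_sphere_zero_iff_norm] at h
    set ψ : ℝ → ℝ := fun r =>
      (2 * u x - u (x - r • (ξ:EE d)) - u (x + r • (ξ:EE d))) * r ^ (-1 - α) with hψ
    have hpt : ∀ r ∈ Set.Ioi (0:ℝ),
        r ^ (d - 1) * H (r • (ξ:EE d)) = (Set.Ici r₀).indicator ψ r := by
      intro r hr
      have hr0 : (0:ℝ) < r := hr
      have hnorm : ‖r • (ξ:EE d)‖ = r := by
        rw [norm_smul, hξ, mul_one, Real.norm_eq_abs, abs_of_pos hr0]
      have hmem : r • (ξ:EE d) ∈ (Metric.ball (0:EE d) r₀)ᶜ ↔ r₀ ≤ r := by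
        rw [Set.mem_compl_iff, Metric.mem_ball, dist_zero_right, hnorm, not_lt]
      have hmem' : -(r • (ξ:EE d)) ∈ (Metric.ball (0:EE d) r₀)ᶜ ↔ r₀ ≤ r := by
        rw [Set.mem_compl_iff, Metric.mem_ball, dist_zero_right, norm_neg, hnorm, not_lt]
      by_cases hcase : r₀ ≤ r
      · rw [Set.indicator_of_mem (Set.mem_Ici.2 hcase), hψ]
        rw [hHdef]
        simp only []
        rw [hGdef, Set.indicator_of_mem (hmem.2 hcase), Set.indicator_of_mem (hmem'.2 hcase),
          hg1]
        simp only []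
        rw [norm_neg, hnorm]
        rw [show x + -(r • (ξ:EE d)) = x - r • (ξ:EE d) from (sub_eq_add_neg x _).symm]
        have hpow : (r:ℝ) ^ (d - 1) = r ^ ((d:ℝ) - 1) := by
          rw [← Real.rpow_natCast r (d - 1), Nat.cast_sub hd, Nat.cast_one]
        have hPAB : r ^ ((d:ℝ) - 1) / r ^ ((d:ℝ) + α) = r ^ (-1 - α) := by
          rw [← Real.rpow_sub hr0, show ((d:ℝ) - 1 - ((d:ℝ) + α)) = -1 - α by ring]
        have hA : r ^ ((d:ℝ) + α) ≠ 0 := (Real.rpow_pos_of_pos hr0 _).ne'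
        rw [hpow, ← hPAB]
        field_simp
        ring
      · rw [Set.indicator_of_notMem (fun h => hcase (Set.mem_Ici.1 h))]
        rw [hHdef]
        simp only []
        rw [hGdef, Set.indicator_of_notMem (fun h => hcase (hmem.1 h)),
          Set.indicator_of_notMem (fun h => hcase (hmem'.1 h))]
        ring
    calc (∫ r in Set.Ioi (0:ℝ), r ^ (d - 1) * H (r • (ξ:EE d)))
        = ∫ r in Set.Ioi (0:ℝ), (Set.Ici r₀).indicator ψ r :=
          setIntegral_congr_fun measurableSet_Ioi hpt
      _ = ∫ r in Set.Ioi (0:ℝ) ∩ Set.Ici r₀, ψ r := setIntegral_indicator measurableSet_Ici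
      _ = ∫ r in Set.Ici r₀, ψ r := by
          have hset : Set.Ioi (0:ℝ) ∩ Set.Ici r₀ = Set.Ici r₀ := by
            ext r
            simp only [Set.mem_inter_iff, Set.mem_Ioi, Set.mem_Ici, and_iff_right_iff_imp]
            intro h; linarith
          rw [hset]
      _ = ∫ r in Set.Ioi r₀, ψ r := integral_Ici_eq_integral_Ioi
  -- substitution η = r₀ / r, per direction
  have key2 : ∀ ξ : Metric.sphere (0:EE d) 1,
      (∫ η in (0:ℝ)..1,
          (2 * u x - u (x - (r₀ / η) • (ξ:EE d)) - u (x + (r₀ / η) • (ξ:EE d))) * (α * η ^ (α - 1)))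
        = (α * r₀ ^ α) * ∫ r in Set.Ioi r₀,
            (2 * u x - u (x - r • (ξ:EE d)) - u (x + r • (ξ:EE d))) * r ^ (-1 - α) := by
    intro ξ'
    set ξ : EE d := (ξ' : EE d)
    set g : ℝ → ℝ := fun η =>
      (2 * u x - u (x - (r₀ / η) • ξ) - u (x + (r₀ / η) • ξ)) * (α * η ^ (α - 1)) with hgdef
    have himg : (fun r => r₀ / r) '' Set.Ioi r₀ = Set.Ioo (0:ℝ) 1 := by
      ext η
      constructor
      · rintro ⟨r, hr, rfl⟩
        have hr0 : 0 < r := hr₀.trans hr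
        exact ⟨div_pos hr₀ hr0, (div_lt_one hr0).2 hr⟩
      · rintro ⟨h0, h1⟩
        refine ⟨r₀ / η, ?_, ?_⟩
        · rw [Set.mem_Ioi, lt_div_iff₀ h0]
          nlinarith
        · field_simp
    have hderiv : ∀ r ∈ Set.Ioi r₀,
        HasDerivWithinAt (fun r => r₀ / r) (-(r₀ / r ^ 2)) (Set.Ioi r₀) r := by
      intro r hr
      have hr0 : r ≠ 0 := (hr₀.trans hr).ne'
      have h1 : HasDerivAt (fun y : ℝ => r₀ / y) (-(r₀ / r ^ 2)) r := by
        simpa [div_eq_mul_inv, mul_neg] using (hasDerivAt_inv hr0).const_mul r₀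
      exact h1.hasDerivWithinAt
    have hinj : Set.InjOn (fun r => r₀ / r) (Set.Ioi r₀) := by
      intro a ha b hb h
      have ha0 : a ≠ 0 := (hr₀.trans ha).ne'
      have hb0 : b ≠ 0 := (hr₀.trans hb).ne'
      field_simp at h
      linarith
    rw [intervalIntegral.integral_of_le zero_le_one, integral_Ioc_eq_integral_Ioo, ← himg,
      integral_image_eq_integral_abs_deriv_smul measurableSet_Ioi hderiv hinj g,
      ← integral_const_mul]
    refine setIntegral_congr_fun measurableSet_Ioi fun r hr => ?_
    have hr0 : (0:ℝ) < r := hr₀.trans hr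
    have habs : |(-(r₀ / r ^ 2))| = r₀ / r ^ 2 := by
      rw [abs_neg, abs_of_pos (div_pos hr₀ (by positivity))]
    have hdd : r₀ / (r₀ / r) = r := by field_simp
    have hgr : g (r₀ / r) = (2 * u x - u (x - r • ξ) - u (x + r • ξ)) * (α * (r₀ / r) ^ (α - 1)) := by
      rw [hgdef]; simp only [hdd]
    rw [smul_eq_mul, habs, hgr]
    have e1 : (r₀ / r) ^ (α - 1) = r₀ ^ (α - 1) / r ^ (α - 1) :=
      Real.div_rpow hr₀.le hr0.le (α - 1)
    have e2 : r₀ ^ (α - 1) * r₀ = r₀ ^ α := by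
      conv_rhs => rw [show α = (α - 1) + 1 by ring]
      rw [Real.rpow_add hr₀, Real.rpow_one]
    have e3 : r ^ (-1 - α) * (r ^ (α - 1) * r ^ 2) = 1 := by
      rw [← Real.rpow_natCast r 2, ← Real.rpow_add hr0, ← Real.rpow_add hr0,
        show (-1 - α + (α - 1 + ((2:ℕ):ℝ)) : ℝ) = 0 by push_cast; ring, Real.rpow_zero]
    have hra : r ^ (α - 1) ≠ 0 := (Real.rpow_pos_of_pos hr0 _).ne'
    rw [e1]
    field_simp
    linear_combination ((2 * u x - u (x - r • ξ) - u (x + r • ξ))) * e2 -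
      (r₀ ^ α * (2 * u x - u (x - r • ξ) - u (x + r • ξ))) * e3
  -- positivity of S
  have hS0 : 0 < S := by
    rw [hS, Measure.toSphere_apply_univ]
    refine ENNReal.toReal_pos ?_ ?_
    · refine mul_ne_zero ?_ (Metric.measure_ball_pos _ _ one_pos).ne'
      rw [hfr]
      exact_mod_cast Nat.cast_ne_zero.2 hd.ne'
    · exact ENNReal.mul_ne_top (ENNReal.natCast_ne_top _) measure_ball_lt_top.ne
  -- assemble
  set T : ℝ := ∫ ξ : Metric.sphere (0:EE d) 1,
      (∫ r in Set.Ioi r₀,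
        (2 * u x - u (x - r • (ξ:EE d)) - u (x + r • (ξ:EE d))) * r ^ (-1 - α)) ∂ν with hT
  have hL : (∫ y in (Metric.ball x r₀)ᶜ, f₀ y) = (1/2) * T := by
    rw [hLHS1, hG2, hpolar, hT]
    congr 1
    exact integral_congr_ae (Filter.Eventually.of_forall key)
  have hR : (∫ ξ : Metric.sphere (0:EE d) 1,
      (∫ η in (0:ℝ)..1,
        (2 * u x - u (x - (r₀ / η) • (ξ:EE d)) - u (x + (r₀ / η) • (ξ:EE d))) * (α * η ^ (α - 1))) ∂ν)
      = (α * r₀ ^ α) * T := by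
    rw [hT, ← integral_const_mul]
    exact integral_congr_ae (Filter.Eventually.of_forall key2)
  have hgoalL : (∫ y in (Metric.ball x r₀)ᶜ, (u x - u y) / ‖x - y‖ ^ ((d:ℝ) + α))
      = (1/2) * T := hL
  rw [hgoalL, hR]
  have hpowu : r₀ ^ (-α) * r₀ ^ α = 1 := by
    rw [← Real.rpow_add hr₀]
    simp
  field_simp
  linear_combination (-T) * hpowu
end

section
/- For 0 < α < 1, the function u(x) = sin(x)/√x (extended by u(0)=0) satisfies that the weakly singular integral ∫₀ˣ (x−s)^{−1/2} u(s) ds = π sin(x/2) J₀(x/2) for all x > 0, where J₀ is the Bessel function of the first kind of order zero. -/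
open MeasureTheory intervalIntegral

/-- The Bessel function of the first kind of order zero,
`J₀(z) = Σ_{k≥0} (−z²)^k / ((k!)² 4^k)`. -/
noncomputable def besselJ0 (z : ℝ) : ℝ :=
  ∑' k : ℕ, (-(z ^ 2)) ^ k / ((k.factorial : ℝ) ^ 2 * 4 ^ k)

private lemma wallis_cos (k : ℕ) :
    ∫ t in (0:ℝ)..Real.pi, Real.cos t ^ (2 * k)
      = Real.pi * ((2 * k).factorial : ℝ) / ((k.factorial : ℝ) ^ 2 * 4 ^ k) := by
  induction k with
  | zero => simp
  | succ n ih =>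
    have h2 : 2 * (n + 1) = 2 * n + 2 := by ring
    rw [h2, integral_cos_pow, ih]
    have hne : ((2 * n).factorial : ℝ) ≠ 0 := Nat.cast_ne_zero.mpr (2 * n).factorial_ne_zero
    have hne' : ((n).factorial : ℝ) ≠ 0 := Nat.cast_ne_zero.mpr n.factorial_ne_zero
    have e1 : ((2 * n + 2).factorial : ℝ)
        = (2 * n + 2) * ((2 * n + 1) * (2 * n).factorial) := by
      push_cast [Nat.factorial_succ]
      ring
    have e2 : (((n + 1)).factorial : ℝ) = (n + 1) * n.factorial := by
      push_cast [Nat.factorial_succ]; ring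
    rw [e1, e2]
    simp only [Real.sin_pi, Real.sin_zero]
    have h4 : (4 : ℝ) ^ (n + 1) = 4 * 4 ^ n := by ring
    rw [h4]
    field_simp
    push_cast
    ring

/-- Integral representation of `besselJ0`. -/
private lemma pi_mul_besselJ0 (z : ℝ) :
    Real.pi * besselJ0 z = ∫ θ in (0:ℝ)..Real.pi, Real.cos (z * Real.cos θ) := by
  have h1 : ∀ θ : ℝ, Real.cos (z * Real.cos θ)
      = ∑' k : ℕ, (-1) ^ k * (z * Real.cos θ) ^ (2 * k) / ((2 * k).factorial : ℝ) :=
    fun θ => Real.cos_eq_tsum _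
  rw [intervalIntegral.integral_of_le Real.pi_pos.le]
  simp_rw [h1]
  set F : ℕ → ℝ → ℝ :=
    fun k θ => (-1) ^ k * (z * Real.cos θ) ^ (2 * k) / ((2 * k).factorial : ℝ) with hF
  have hFcont : ∀ k, Continuous (F k) := by
    intro k; fun_prop
  have hFint : ∀ k, Integrable (F k) (volume.restrict (Set.Ioc 0 Real.pi)) := by
    intro k
    exact (hFcont k).integrableOn_Ioc
  have hbound : ∀ k, ∫ θ in Set.Ioc (0:ℝ) Real.pi, ‖F k θ‖
      ≤ Real.pi * (|z| ^ (2 * k) / ((2 * k).factorial : ℝ)) := by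
    intro k
    have hle : ∀ θ ∈ Set.Ioc (0:ℝ) Real.pi,
        ‖F k θ‖ ≤ |z| ^ (2 * k) / ((2 * k).factorial : ℝ) := by
      intro θ _
      have e : ‖F k θ‖ = |z * Real.cos θ| ^ (2 * k) / ((2 * k).factorial : ℝ) := by
        rw [hF]
        rw [Real.norm_eq_abs, abs_div, abs_mul, abs_pow, abs_pow, abs_neg, abs_one,
          one_pow, one_mul, Nat.abs_cast]
      rw [e]
      have hfac : (0:ℝ) < ((2 * k).factorial : ℝ) := Nat.cast_pos.mpr (Nat.factorial_pos _)
      have hnum : |z * Real.cos θ| ^ (2 * k) ≤ |z| ^ (2 * k) := by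
        apply pow_le_pow_left₀ (abs_nonneg _)
        rw [abs_mul]
        nlinarith [Real.abs_cos_le_one θ, abs_nonneg z]
      exact div_le_div_of_nonneg_right hnum hfac.le
    calc ∫ θ in Set.Ioc (0:ℝ) Real.pi, ‖F k θ‖
        ≤ ∫ _θ in Set.Ioc (0:ℝ) Real.pi, (|z| ^ (2 * k) / ((2 * k).factorial : ℝ)) := by
          refine setIntegral_mono_on ((hFint k).norm) ?_ measurableSet_Ioc hle
          exact (integrableOn_const_iff).mpr (Or.inr (by simp [Real.volume_Ioc]))
      _ = Real.pi * (|z| ^ (2 * k) / ((2 * k).factorial : ℝ)) := by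
          rw [setIntegral_const, Real.volume_real_Ioc, smul_eq_mul]
          norm_num [Real.pi_pos.le, ENNReal.toReal_ofReal]
  have hsum : Summable (fun k => ∫ θ in Set.Ioc (0:ℝ) Real.pi, ‖F k θ‖) := by
    refine Summable.of_nonneg_of_le
      (fun k => integral_nonneg fun θ => norm_nonneg _) hbound ?_
    have h2 : Function.Injective (fun k : ℕ => 2 * k) := fun a b h => by dsimp at h; omega
    exact ((Real.summable_pow_div_factorial |z|).comp_injective h2).mul_left _
  rw [← MeasureTheory.integral_tsum_of_summable_integral_norm hFint hsum]
  rw [besselJ0, ← tsum_mul_left]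
  congr 1
  funext k
  have e : ∀ θ : ℝ, F k θ
      = ((-1) ^ k * z ^ (2 * k) / ((2 * k).factorial : ℝ)) * Real.cos θ ^ (2 * k) := by
    intro θ; rw [hF]; simp only; rw [mul_pow]; ring
  simp_rw [e]
  rw [MeasureTheory.integral_const_mul, ← intervalIntegral.integral_of_le Real.pi_pos.le,
    wallis_cos]
  have hz : (-(z ^ 2)) ^ k = (-1) ^ k * z ^ (2 * k) := by
    rw [neg_pow, pow_mul]
  rw [hz]
  have hne : ((2 * k).factorial : ℝ) ≠ 0 := Nat.cast_ne_zero.mpr (2 * k).factorial_ne_zero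
  have hne' : ((k).factorial : ℝ) ≠ 0 := Nat.cast_ne_zero.mpr k.factorial_ne_zero
  field_simp

/-- The weakly singular Volterra identity
`∫₀ˣ (x−s)^{−1/2} sin(s)/√s ds = π sin(x/2) J₀(x/2)` for `x > 0`. -/
theorem weakly_singular_bessel_identity (x : ℝ) (hx : 0 < x) :
    ∫ s in (0:ℝ)..x, (x - s) ^ (-(1:ℝ)/2) * (Real.sin s / Real.sqrt s)
      = Real.pi * Real.sin (x / 2) * besselJ0 (x / 2) := by
  set φ : ℝ → ℝ := fun θ => x * (1 - Real.cos θ) / 2 with hφ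
  have key : ∫ s in (0:ℝ)..x, (x - s) ^ (-(1:ℝ)/2) * (Real.sin s / Real.sqrt s)
      = ∫ θ in (0:ℝ)..Real.pi, Real.sin (φ θ) := by
    have hderiv : ∀ θ ∈ Set.Ioo (0:ℝ) Real.pi,
        HasDerivWithinAt φ ((fun θ => x * Real.sin θ / 2) θ) (Set.Ioo 0 Real.pi) θ := by
      intro θ _
      have h : HasDerivAt φ (x * Real.sin θ / 2) θ := by
        have h := (((Real.hasDerivAt_cos θ).const_sub 1).const_mul x).div_const 2
        simpa [hφ] using h
      exact h.hasDerivWithinAt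
    have hinj : Set.InjOn φ (Set.Ioo 0 Real.pi) := by
      intro a ha b hb hab
      simp only [hφ] at hab
      have h2 : 1 - Real.cos a = 1 - Real.cos b := by
        have := mul_left_cancel₀ hx.ne' (by linarith : x * (1 - Real.cos a) = x * (1 - Real.cos b))
        exact this
      have hc : Real.cos a = Real.cos b := by linarith
      exact Real.injOn_cos (Set.mem_Icc.mpr ⟨ha.1.le, ha.2.le⟩)
        (Set.mem_Icc.mpr ⟨hb.1.le, hb.2.le⟩) hc
    have himg : φ '' Set.Ioo 0 Real.pi = Set.Ioo 0 x := by
      apply Set.Subset.antisymm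
      · rintro _ ⟨θ, hθ, rfl⟩
        have hc1 : Real.cos θ < 1 := by
          have := Real.strictAntiOn_cos (Set.mem_Icc.mpr ⟨le_refl 0, Real.pi_pos.le⟩)
            (Set.mem_Icc.mpr ⟨hθ.1.le, hθ.2.le⟩) hθ.1
          simpa using this
        have hc2 : -1 < Real.cos θ := by
          have := Real.strictAntiOn_cos (Set.mem_Icc.mpr ⟨hθ.1.le, hθ.2.le⟩)
            (Set.mem_Icc.mpr ⟨Real.pi_pos.le, le_refl _⟩) hθ.2
          simpa using this
        constructor
        · simp only [hφ]; nlinarith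
        · simp only [hφ]; nlinarith
      · have hc : ContinuousOn φ (Set.Icc 0 Real.pi) := by
          simp only [hφ]; fun_prop
        have h := intermediate_value_Ioo Real.pi_pos.le hc
        rw [show φ 0 = 0 by norm_num [hφ], show φ Real.pi = x by norm_num [hφ]] at h
        exact h
    rw [intervalIntegral.integral_of_le hx.le, MeasureTheory.integral_Ioc_eq_integral_Ioo,
      ← himg,
      MeasureTheory.integral_image_eq_integral_abs_deriv_smul measurableSet_Ioo hderiv hinj]
    rw [intervalIntegral.integral_of_le Real.pi_pos.le, MeasureTheory.integral_Ioc_eq_integral_Ioo]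
    apply MeasureTheory.setIntegral_congr_fun measurableSet_Ioo
    intro θ hθ
    obtain ⟨h0, hπ⟩ := hθ
    have hsin : 0 < Real.sin θ := Real.sin_pos_of_pos_of_lt_pi h0 hπ
    have hc1 : Real.cos θ < 1 := by
      have := Real.strictAntiOn_cos (Set.mem_Icc.mpr ⟨le_refl 0, Real.pi_pos.le⟩)
        (Set.mem_Icc.mpr ⟨h0.le, hπ.le⟩) h0
      simpa using this
    have hc2 : -1 < Real.cos θ := by
      have := Real.strictAntiOn_cos (Set.mem_Icc.mpr ⟨h0.le, hπ.le⟩)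
        (Set.mem_Icc.mpr ⟨Real.pi_pos.le, le_refl _⟩) hπ
      simpa using this
    have hs0 : 0 < φ θ := by simp only [hφ]; nlinarith
    have hxs : 0 < x - φ θ := by simp only [hφ]; nlinarith
    have hA : 0 < Real.sqrt (x - φ θ) := Real.sqrt_pos.mpr hxs
    have hB : 0 < Real.sqrt (φ θ) := Real.sqrt_pos.mpr hs0
    have e1 : (x - φ θ) ^ (-(1:ℝ)/2) = (Real.sqrt (x - φ θ))⁻¹ := by
      rw [Real.sqrt_eq_rpow, ← Real.rpow_neg hxs.le]
      norm_num
    have e2 : Real.sqrt (x - φ θ) * Real.sqrt (φ θ) = x * Real.sin θ / 2 := by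
      rw [← Real.sqrt_mul hxs.le]
      have hsq : (x - φ θ) * φ θ = (x * Real.sin θ / 2) ^ 2 := by
        have hpy := Real.sin_sq_add_cos_sq θ
        simp only [hφ]
        linear_combination (-(x^2)/4) * hpy
      rw [hsq, Real.sqrt_sq (by positivity)]
    have habs : |x * Real.sin θ / 2| = x * Real.sin θ / 2 := abs_of_pos (by positivity)
    dsimp only
    rw [smul_eq_mul, habs, e1]
    field_simp
    linear_combination (-2 * Real.sin (φ θ)) * e2
  rw [key]
  have h0 : Real.pi * Real.sin (x/2) * besselJ0 (x/2)
      = Real.sin (x/2) * (Real.pi * besselJ0 (x/2)) := by ring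
  rw [h0, pi_mul_besselJ0, ← intervalIntegral.integral_const_mul]
  have hsplit : ∀ θ : ℝ, Real.sin (x/2) * Real.cos (x/2 * Real.cos θ)
      = (Real.sin (x * (1 + Real.cos θ) / 2) + Real.sin (x * (1 - Real.cos θ) / 2)) / 2 := by
    intro θ
    have e1 : x * (1 + Real.cos θ) / 2 = x/2 + x/2 * Real.cos θ := by ring
    have e2 : x * (1 - Real.cos θ) / 2 = x/2 - x/2 * Real.cos θ := by ring
    rw [e1, e2, Real.sin_add, Real.sin_sub]
    ring
  simp_rw [hsplit]
  have hint1 : IntervalIntegrable (fun θ => Real.sin (x * (1 + Real.cos θ) / 2))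
      volume 0 Real.pi := (Continuous.intervalIntegrable (by fun_prop) _ _)
  have hint2 : IntervalIntegrable (fun θ => Real.sin (x * (1 - Real.cos θ) / 2))
      volume 0 Real.pi := (Continuous.intervalIntegrable (by fun_prop) _ _)
  rw [intervalIntegral.integral_div, intervalIntegral.integral_add hint1 hint2]
  have hsym : ∫ θ in (0:ℝ)..Real.pi, Real.sin (x * (1 + Real.cos θ) / 2)
      = ∫ θ in (0:ℝ)..Real.pi, Real.sin (x * (1 - Real.cos θ) / 2) := by
    have h := intervalIntegral.integral_comp_sub_left (a := (0:ℝ)) (b := Real.pi)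
      (fun θ => Real.sin (x * (1 - Real.cos θ) / 2)) Real.pi
    simp only [sub_self, sub_zero] at h
    rw [← h]
    congr 1
    funext θ
    rw [Real.cos_pi_sub]
    ring_nf
  rw [hsym]
  simp only [hφ]
  ring
end
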